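/- arXiv:1806.00300 — 5 statements merged into one kernel-verified Lean document; each statement's English description precedes it below -/
import Mathlib

section
/- For any instance of G*_ε, the set of makespan values attained by local optima, {f(x) : x ∈ {0,1}ⁿ a local optimum}, has cardinality at most s+1. -/
/-- The load of machine `b` under assignment `x` (job `i` is on machine `x i`). -/
noncomputable def load {n : ℕ} (p : Fin n → ℝ) (x : Fin n → Bool) (b : Bool) : ℝ :=
  ∑ i ∈ Finset.univ.filter (fun i => x i = b), p i

/-- The makespan of a solution `x` of the Partition instance with processing times `p`. -/
noncomputable def makespan {n : ℕ} (p : Fin n → ℝ) (x : Fin n → Bool) : ℝ :=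
  max (load p x false) (load p x true)

/-- `x` is a local optimum: no solution at Hamming distance 1 has strictly smaller makespan. -/
def IsLocalOpt {n : ℕ} (p : Fin n → ℝ) (x : Fin n → Bool) : Prop :=
  ∀ j : Fin n, ¬ makespan p (Function.update x j (!x j)) < makespan p x

/-- The processing times of the generalised worst-case instance class `G*_ε`
with `n` jobs and `s` large jobs (indices `0,…,s-1` are the large jobs). -/
noncomputable def gProc (n s : ℕ) (ε : ℝ) : Fin n → ℝ := fun i =>
  if (i : ℕ) < s then 1 / (2 * (s : ℝ) - 1) - ε / (2 * s)
  else (((s : ℝ) - 1) / ((n : ℝ) - s)) * (1 / (2 * (s : ℝ) - 1) + ε / (2 * ((s : ℝ) - 1)))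


lemma load_false_add_load_true {n : ℕ} (p : Fin n → ℝ) (x : Fin n → Bool) :
    load p x false + load p x true = ∑ i, p i := by
  unfold load
  rw [← Finset.sum_filter_add_sum_filter_not Finset.univ (fun i => x i = false) p]
  congr 1
  apply Finset.sum_congr _ (fun _ _ => rfl)
  ext i; simp

lemma load_update_self {n : ℕ} (p : Fin n → ℝ) (x : Fin n → Bool) (j : Fin n) :
    load p (Function.update x j (!x j)) (x j) = load p x (x j) - p j := by
  unfold load
  have h : Finset.univ.filter (fun i => Function.update x j (!x j) i = x j)
      = (Finset.univ.filter (fun i => x i = x j)).erase j := by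
    ext i
    by_cases h : i = j <;> simp [Function.update, h]
  rw [h, Finset.sum_erase_eq_sub (by simp)]

lemma load_update_other {n : ℕ} (p : Fin n → ℝ) (x : Fin n → Bool) (j : Fin n) :
    load p (Function.update x j (!x j)) (!x j) = load p x (!x j) + p j := by
  unfold load
  have h : Finset.univ.filter (fun i => Function.update x j (!x j) i = !x j)
      = insert j (Finset.univ.filter (fun i => x i = !x j)) := by
    ext i
    by_cases h : i = j <;> simp [Function.update, h]
  rw [h, Finset.sum_insert (by simp), add_comm]

lemma makespan_update {n : ℕ} (p : Fin n → ℝ) (x : Fin n → Bool) (j : Fin n) :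
    makespan p (Function.update x j (!x j))
      = max (load p x (x j) - p j) (load p x (!x j) + p j) := by
  have h1 := load_update_self p x j
  have h2 := load_update_other p x j
  unfold makespan
  cases hx : x j
  · rw [hx] at h1 h2; simp only [Bool.not_false] at h1 h2 ⊢; rw [h1, h2]
  · rw [hx] at h1 h2; simp only [Bool.not_true] at h1 h2 ⊢; rw [h1, h2, max_comm]

lemma local_constraint {n : ℕ} (p : Fin n → ℝ) (x : Fin n → Bool)
    (hopt : IsLocalOpt p x) (j : Fin n) (hpj : 0 < p j) :
    load p x (x j) ≤ load p x (!x j) + p j := by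
  have h := hopt j
  rw [makespan_update] at h
  have hm : load p x (x j) ≤ makespan p x := by
    unfold makespan; cases hx : x j <;> simp [hx]
  by_contra hcon
  push_neg at hcon
  exact h (max_lt (by linarith) (by linarith))

theorem card_localOpt_makespans_le
    (n s : ℕ) (ε : ℝ) (hn : Even n) (hs : Even s) (h2s : 2 ≤ s) (hsn : s < n)
    (hε0 : 0 < ε) (hε1 : ε < 1 / (2 * (s : ℝ) - 1)) :
    {y : ℝ | ∃ x : Fin n → Bool,
        IsLocalOpt (gProc n s ε) x ∧ makespan (gProc n s ε) x = y}.ncard ≤ s + 1 := by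
  set pL : ℝ := 1 / (2 * (s:ℝ) - 1) - ε / (2 * s) with hpL
  set pS : ℝ := ((s:ℝ) - 1) / ((n:ℝ) - s) * (1 / (2 * (s:ℝ) - 1) + ε / (2 * ((s:ℝ) - 1)))
    with hpS
  have hsR : (2:ℝ) ≤ (s:ℝ) := by exact_mod_cast h2s
  have hnR : (s:ℝ) < (n:ℝ) := by exact_mod_cast hsn
  have hps0 : 0 < pS := by
    apply mul_pos (div_pos (by linarith) (by linarith))
    have h1 : (0:ℝ) < 1 / (2*(s:ℝ)-1) := by
      apply div_pos one_pos; linarith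
    have h2 : (0:ℝ) < ε / (2*((s:ℝ)-1)) := by
      apply div_pos hε0; linarith
    linarith
  have hgp : ∀ i : Fin n, gProc n s ε i = if (i:ℕ) < s then pL else pS := fun i => rfl
  have hsum : ∑ i, gProc n s ε i = 1 := by
    have h0 : ∑ i : Fin n, gProc n s ε i
        = ∑ i ∈ Finset.range n, (if i < s then pL else pS) := by
      simp only [hgp]
      exact Fin.sum_univ_eq_sum_range (fun k => if k < s then pL else pS) n
    rw [h0, ← Finset.sum_range_add_sum_Ico _ hsn.le]
    rw [Finset.sum_congr rfl (fun i hi => if_pos (Finset.mem_range.mp hi)),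
        Finset.sum_congr rfl (fun i hi => if_neg (by
          simp only [Finset.mem_Ico] at hi; omega)),
        Finset.sum_const, Finset.sum_const, Finset.card_range, Nat.card_Ico,
        nsmul_eq_mul, nsmul_eq_mul]
    have hc : ((n - s : ℕ) : ℝ) = (n:ℝ) - s := by
      push_cast [Nat.cast_sub hsn.le]; ring
    rw [hc, hpL, hpS]
    have d1 : 2*(s:ℝ)-1 ≠ 0 := by linarith
    have d2 : (s:ℝ) ≠ 0 := by linarith
    have d3 : (n:ℝ)-(s:ℝ) ≠ 0 := by linarith
    have d4 : (s:ℝ)-1 ≠ 0 := by linarith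
    field_simp
    linear_combination 2 * (inv_mul_cancel₀ d1)
  clear_value pL pS
  have hsub : {y : ℝ | ∃ x, IsLocalOpt (gProc n s ε) x ∧ makespan (gProc n s ε) x = y}
      ⊆ ↑((Finset.range (s+1)).image
          (fun a : ℕ => a * pL + ((max 0 ⌈(1/2 - a*pL)/pS⌉ : ℤ) : ℝ) * pS)) := by
    rintro y ⟨x, hopt, hmk⟩
    obtain ⟨c, hc, hmc⟩ : ∃ c : Bool, load (gProc n s ε) x (!c) ≤ load (gProc n s ε) x c ∧
        makespan (gProc n s ε) x = load (gProc n s ε) x c := by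
      rcases le_total (load (gProc n s ε) x false) (load (gProc n s ε) x true) with h | h
      · exact ⟨true, by simpa using h, by unfold makespan; exact max_eq_right h⟩
      · exact ⟨false, by simpa using h, by unfold makespan; exact max_eq_left h⟩
    set L := load (gProc n s ε) x c with hL
    have hy : y = L := by rw [← hmk, hmc]
    have hsum2 : load (gProc n s ε) x c + load (gProc n s ε) x (!c) = 1 := by
      cases c
      · simpa using (load_false_add_load_true (gProc n s ε) x).trans hsum
      · rw [add_comm]
        simpa using (load_false_add_load_true (gProc n s ε) x).trans hsum
    have hLhalf : 1 ≤ 2 * L := by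
      rw [hL] at hc ⊢; linarith
    set a := ((Finset.univ.filter (fun i => x i = c)).filter
        (fun i : Fin n => (i:ℕ) < s)).card with ha
    set b := ((Finset.univ.filter (fun i => x i = c)).filter
        (fun i : Fin n => ¬ (i:ℕ) < s)).card with hb
    have hLab : L = a * pL + b * pS := by
      rw [hL]; unfold load
      rw [Finset.sum_congr rfl (fun i _ => hgp i), Finset.sum_ite,
        Finset.sum_const, Finset.sum_const, nsmul_eq_mul, nsmul_eq_mul]
    have has : a ≤ s := by
      have h1 : ((Finset.univ.filter (fun i => x i = c)).filter
          (fun i : Fin n => (i:ℕ) < s)).card ≤ (Finset.range s).card :=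
        Finset.card_le_card_of_injOn (fun i => (i:ℕ))
          (fun i hi => by
            simp only [Finset.mem_coe, Finset.mem_filter] at hi
            exact Finset.mem_range.mpr hi.2)
          (fun i _ j _ h => Fin.val_injective h)
      simpa using h1
    clear_value a b L
    refine Finset.mem_coe.mpr (Finset.mem_image.mpr
      ⟨a, Finset.mem_range.mpr (by omega), ?_⟩)
    rw [hy]
    show (a:ℝ) * pL + ((max 0 ⌈(1/2 - (a:ℝ)*pL)/pS⌉ : ℤ) : ℝ) * pS = L
    rcases Nat.eq_zero_or_pos b with hb0 | hb1
    · have hL0 : L = a * pL := by rw [hLab, hb0]; simp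
      have hceil : (max 0 ⌈(1/2 - (a:ℝ)*pL)/pS⌉ : ℤ) = 0 := by
        apply max_eq_left
        apply Int.ceil_le.mpr
        push_cast
        apply div_nonpos_of_nonpos_of_nonneg _ hps0.le
        linarith
      rw [hceil, hL0]; push_cast; ring
    · have hb1' : 0 < ((Finset.univ.filter (fun i => x i = c)).filter
          (fun i : Fin n => ¬ (i:ℕ) < s)).card := hb ▸ hb1
      obtain ⟨j, hj⟩ := Finset.card_pos.mp hb1'
      simp only [Finset.mem_filter, Finset.mem_univ, true_and] at hj
      have hpj : gProc n s ε j = pS := by rw [hgp j, if_neg hj.2]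
      have hcons := local_constraint (gProc n s ε) x hopt j (by rw [hpj]; exact hps0)
      rw [hj.1, hpj, ← hL] at hcons
      have h2L : 2*L ≤ 1 + pS := by
        have := hsum2
        rw [← hL] at this
        linarith
      have hceil : ⌈(1/2 - (a:ℝ)*pL)/pS⌉ = (b:ℤ) := by
        rw [Int.ceil_eq_iff]
        constructor
        · rw [lt_div_iff₀ hps0]; push_cast; nlinarith
        · rw [div_le_iff₀ hps0]; push_cast; linarith
      rw [hceil, max_eq_right (by positivity)]
      push_cast
      linarith [hLab]
  refine le_trans (Set.ncard_le_ncard hsub (Finset.finite_toSet _)) ?_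
  rw [Set.ncard_coe_finset]
  exact le_trans Finset.card_image_le (by simp)
end

section
/- Let x be a solution of an instance of G*_ε with f(x) ≥ ∑_{i=1}^{s} p_i + (1/(s+1))·∑_{i=s+1}^{n} p_i. Then x is not a local optimum, and the fuller machine of x contains at least (n−s)/(s+1) small jobs. -/
lemma load_update {n : ℕ} (p : Fin n → ℝ) (x : Fin n → Bool) (j : Fin n) (c b : Bool) :
    load p (Function.update x j c) b
      = load p x b + (if c = b then p j else 0) - (if x j = b then p j else 0) := by
  simp only [load, Finset.sum_filter]
  have h1 : (fun i => if Function.update x j c i = b then p i else 0)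
      = Function.update (fun i => if x i = b then p i else 0) j (if c = b then p j else 0) := by
    funext i
    by_cases h : i = j
    · subst h; simp
    · simp [Function.update_of_ne h]
  rw [h1, Finset.sum_update_of_mem (Finset.mem_univ j),
    Finset.sum_sdiff_eq_sub (Finset.singleton_subset_iff.mpr (Finset.mem_univ j)),
    Finset.sum_singleton]
  ring

lemma load_split {n : ℕ} (s : ℕ) (p : Fin n → ℝ) (x : Fin n → Bool) (b : Bool) :
    load p x b = (∑ i ∈ Finset.univ.filter (fun i => x i = b ∧ (i:ℕ) < s), p i)
      + ∑ i ∈ Finset.univ.filter (fun i => x i = b ∧ s ≤ (i:ℕ)), p i := by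
  rw [load, ← Finset.sum_union]
  · congr 1
    ext i
    simp only [Finset.mem_filter, Finset.mem_union, Finset.mem_univ, true_and]
    constructor
    · intro h
      rcases lt_or_ge (i:ℕ) s with h'|h'
      · exact Or.inl ⟨h, h'⟩
      · exact Or.inr ⟨h, h'⟩
    · rintro (⟨h,_⟩|⟨h,_⟩) <;> exact h
  · rw [Finset.disjoint_left]
    intro i hi hi'
    simp only [Finset.mem_filter] at hi hi'
    omega

set_option maxHeartbeats 1000000 in
theorem high_makespan_not_localOpt
    (n s : ℕ) (ε : ℝ) (hn : Even n) (hs : Even s) (h2s : 2 ≤ s) (hsn : s < n)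
    (hε0 : 0 < ε) (hε1 : ε < 1 / (2 * (s : ℝ) - 1))
    (x : Fin n → Bool)
    (hx : makespan (gProc n s ε) x ≥
        (∑ i ∈ Finset.univ.filter (fun i : Fin n => (i : ℕ) < s), gProc n s ε i)
        + (1 / ((s : ℝ) + 1))
            * ∑ i ∈ Finset.univ.filter (fun i : Fin n => s ≤ (i : ℕ)), gProc n s ε i) :
    ¬ IsLocalOpt (gProc n s ε) x ∧
    ∀ b : Bool, load (gProc n s ε) x b = makespan (gProc n s ε) x →
      ((n : ℝ) - s) / ((s : ℝ) + 1)
        ≤ ((Finset.univ.filter (fun i : Fin n => x i = b ∧ s ≤ (i : ℕ))).card : ℝ) := by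
  set p := gProc n s ε with hp
  set S : ℝ := (s : ℝ) with hS
  set N : ℝ := (n : ℝ) with hN
  have hS2 : (2:ℝ) ≤ S := by rw [hS]; exact_mod_cast h2s
  have hNS : S + 1 ≤ N := by rw [hS, hN]; exact_mod_cast (hsn : s + 1 ≤ n)
  set pL : ℝ := 1 / (2 * S - 1) - ε / (2 * S) with hpL
  set pS : ℝ := ((S - 1) / (N - S)) * (1 / (2 * S - 1) + ε / (2 * (S - 1))) with hpS
  have hden1 : (0:ℝ) < 2 * S - 1 := by linarith
  have hden2 : (0:ℝ) < S - 1 := by linarith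
  have hden3 : (0:ℝ) < N - S := by linarith
  have hεb : ε * (2 * S - 1) < 1 := by
    have := mul_lt_mul_of_pos_right hε1 hden1
    rwa [one_div, inv_mul_cancel₀ (ne_of_gt hden1)] at this
  have hpL0 : 0 < pL := by
    rw [hpL, sub_pos, div_lt_div_iff₀ (by linarith) hden1]
    nlinarith
  have hpS0 : 0 < pS := by
    apply mul_pos (div_pos hden2 hden3)
    have h1 : 0 < ε / (2 * (S-1)) := div_pos hε0 (by linarith)
    have h2 : 0 < 1 / (2*S-1) := one_div_pos.mpr hden1
    linarith
  have hpLval : ∀ i : Fin n, (i:ℕ) < s → p i = pL := by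
    intro i hi; simp [hp, gProc, hi, hpL, hS]
  have hpSval : ∀ i : Fin n, s ≤ (i:ℕ) → p i = pS := by
    intro i hi; simp [hp, gProc, Nat.not_lt.mpr hi, hpS, hS, hN]
  have hcardL : (Finset.univ.filter (fun i : Fin n => (i:ℕ) < s)).card = s := by
    have h : Finset.univ.filter (fun i : Fin n => (i:ℕ) < s) = Finset.Iio ⟨s, hsn⟩ := by
      ext i; simp [Fin.lt_def]
    rw [h, Fin.card_Iio]
  have hcardS : (Finset.univ.filter (fun i : Fin n => s ≤ (i:ℕ))).card = n - s := by
    have h : Finset.univ.filter (fun i : Fin n => s ≤ (i:ℕ)) = Finset.Ici ⟨s, hsn⟩ := by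
      ext i; simp [Fin.le_def]
    rw [h, Fin.card_Ici]
  have hsumL : (∑ i ∈ Finset.univ.filter (fun i : Fin n => (i:ℕ) < s), p i) = S * pL := by
    rw [Finset.sum_congr rfl (fun i hi => hpLval i (Finset.mem_filter.mp hi).2),
      Finset.sum_const, hcardL, nsmul_eq_mul]
  have hsumS : (∑ i ∈ Finset.univ.filter (fun i : Fin n => s ≤ (i:ℕ)), p i) = (N - S) * pS := by
    rw [Finset.sum_congr rfl (fun i hi => hpSval i (Finset.mem_filter.mp hi).2),
      Finset.sum_const, hcardS, nsmul_eq_mul]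
    congr 1
    push_cast [Nat.cast_sub hsn.le]
    ring
  set Q : ℝ := (N - S) * pS with hQ
  have hxF : makespan p x ≥ S * pL + Q / (S + 1) := by
    rw [hsumL, hsumS] at hx
    calc makespan p x ≥ S * pL + 1/(S+1) * Q := hx
      _ = S * pL + Q / (S+1) := by ring
  have hQval : Q = (S - 1) / (2*S-1) + ε / 2 := by
    rw [hQ, hpS]; field_simp
  have hQ0 : 0 < Q := mul_pos hden3 hpS0
  have hkey : Q / (S + 1) < pL := by
    have hnum : 0 < 4*S - ε*(2*S-1)*(2*S+1) := by
      nlinarith [mul_lt_mul_of_pos_right hεb (show (0:ℝ) < 2*S+1 by linarith)]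
    have hsub : pL - Q/(S+1)
        = (4*S - ε*(2*S-1)*(2*S+1)) / (2*S*(2*S-1)*(S+1)) := by
      rw [hpL, hQval]
      field_simp
      ring
    have hpos : 0 < pL - Q/(S+1) := by
      rw [hsub]
      exact div_pos hnum (by positivity)
    linarith
  have hload : ∀ b : Bool, load p x b
      = ((Finset.univ.filter (fun i : Fin n => x i = b ∧ (i:ℕ) < s)).card : ℝ) * pL
      + ((Finset.univ.filter (fun i : Fin n => x i = b ∧ s ≤ (i:ℕ))).card : ℝ) * pS := by
    intro b
    rw [load_split s p x b]
    congr 1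
    · rw [Finset.sum_congr rfl (fun i hi => hpLval i (Finset.mem_filter.mp hi).2.2),
        Finset.sum_const, nsmul_eq_mul]
    · rw [Finset.sum_congr rfl (fun i hi => hpSval i (Finset.mem_filter.mp hi).2.2),
        Finset.sum_const, nsmul_eq_mul]
  have hcLle : ∀ b : Bool,
      ((Finset.univ.filter (fun i : Fin n => x i = b ∧ (i:ℕ) < s)).card : ℝ) ≤ S := by
    intro b
    have h1 : (Finset.univ.filter (fun i : Fin n => x i = b ∧ (i:ℕ) < s)).card
        ≤ (Finset.univ.filter (fun i : Fin n => (i:ℕ) < s)).card := by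
      apply Finset.card_le_card
      intro i hi
      simp only [Finset.mem_filter] at *
      exact ⟨hi.1, hi.2.2⟩
    rw [hcardL] at h1
    rw [hS]
    exact_mod_cast h1
  have hcSle : ∀ b : Bool,
      ((Finset.univ.filter (fun i : Fin n => x i = b ∧ s ≤ (i:ℕ))).card : ℝ) ≤ N - S := by
    intro b
    have h1 : (Finset.univ.filter (fun i : Fin n => x i = b ∧ s ≤ (i:ℕ))).card
        ≤ (Finset.univ.filter (fun i : Fin n => s ≤ (i:ℕ))).card := by
      apply Finset.card_le_card
      intro i hi
      simp only [Finset.mem_filter] at *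
      exact ⟨hi.1, hi.2.2⟩
    rw [hcardS] at h1
    have h2 : ((n - s : ℕ) : ℝ) = N - S := by push_cast [Nat.cast_sub hsn.le]; ring
    calc ((Finset.univ.filter (fun i : Fin n => x i = b ∧ s ≤ (i:ℕ))).card : ℝ)
        ≤ ((n - s : ℕ) : ℝ) := by exact_mod_cast h1
      _ = N - S := h2
  clear_value S N p pL pS Q
  have partb : ∀ b : Bool, load p x b = makespan p x →
      (N - S) / (S + 1)
        ≤ ((Finset.univ.filter (fun i : Fin n => x i = b ∧ s ≤ (i : ℕ))).card : ℝ) := by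
    intro b hb
    have h1 : ((Finset.univ.filter (fun i : Fin n => x i = b ∧ (i:ℕ) < s)).card : ℝ) * pL
        + ((Finset.univ.filter (fun i : Fin n => x i = b ∧ s ≤ (i:ℕ))).card : ℝ) * pS
        ≥ S * pL + Q / (S+1) := by
      rw [← hload b, hb]; exact hxF
    have h2 : ((Finset.univ.filter (fun i : Fin n => x i = b ∧ (i:ℕ) < s)).card : ℝ) * pL
        ≤ S * pL := mul_le_mul_of_nonneg_right (hcLle b) hpL0.le
    have h3 : ((Finset.univ.filter (fun i : Fin n => x i = b ∧ s ≤ (i:ℕ))).card : ℝ) * pS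
        ≥ Q / (S+1) := by linarith
    have h5 : (N - S)/(S+1) * pS
        ≤ ((Finset.univ.filter (fun i : Fin n => x i = b ∧ s ≤ (i:ℕ))).card : ℝ) * pS := by
      have h6 : (N-S)/(S+1) * pS = Q/(S+1) := by rw [hQ]; ring
      linarith [h6]
    exact le_of_mul_le_mul_right h5 hpS0
  refine ⟨?_, partb⟩
  obtain ⟨b0, hb0⟩ : ∃ b, load p x b = makespan p x := by
    rcases le_total (load p x false) (load p x true) with h|h
    · exact ⟨true, (max_eq_right h).symm⟩
    · exact ⟨false, (max_eq_left h).symm⟩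
  have hlb0 : load p x b0 ≥ S * pL + Q / (S+1) := hb0 ▸ hxF
  have hlarge : ∃ j : Fin n, x j = b0 ∧ (j:ℕ) < s := by
    by_contra hcon
    push_neg at hcon
    have hempty : Finset.univ.filter (fun i : Fin n => x i = b0 ∧ (i:ℕ) < s) = ∅ := by
      rw [Finset.filter_eq_empty_iff]
      rintro i -
      rintro ⟨h1, h2⟩
      exact absurd h2 (Nat.not_lt.mpr (hcon i h1))
    have h1 := hload b0
    rw [hempty] at h1
    simp only [Finset.card_empty, Nat.cast_zero, zero_mul, zero_add] at h1
    have h2 : load p x b0 ≤ Q := by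
      rw [h1, hQ]
      exact mul_le_mul_of_nonneg_right (hcSle b0) hpS0.le
    -- Q < S * pL + Q/(S+1) since Q/(S+1) < pL
    have h3 : Q = Q/(S+1) * (S+1) := by field_simp
    linarith [mul_lt_mul_of_pos_left hkey hden2, h3, h2, hlb0, hkey]
  obtain ⟨j, hj1, hj2⟩ := hlarge
  intro hopt
  apply hopt j
  have hpj : p j = pL := hpLval j hj2
  have htot : load p x false + load p x true = S * pL + Q := by
    have h0 := Finset.sum_filter_add_sum_filter_not Finset.univ (fun i : Fin n => x i = false) p
    have h1 : Finset.univ.filter (fun i : Fin n => ¬ x i = false)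
        = Finset.univ.filter (fun i : Fin n => x i = true) := by
      apply Finset.filter_congr; intro i _; simp
    have h2 := Finset.sum_filter_add_sum_filter_not Finset.univ (fun i : Fin n => (i:ℕ) < s) p
    have h3 : Finset.univ.filter (fun i : Fin n => ¬ (i:ℕ) < s)
        = Finset.univ.filter (fun i : Fin n => s ≤ (i:ℕ)) := by
      apply Finset.filter_congr; intro i _; simp
    rw [h1] at h0
    rw [h3, hsumL, hsumS] at h2
    rw [load, load, h0, ← h2]
  have hlnb0 : load p x (!b0) = S * pL + Q - load p x b0 := by
    cases b0 <;> simp only [Bool.not_false, Bool.not_true] <;> linarith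
  have hA : load p (Function.update x j (!x j)) b0 = load p x b0 - pL := by
    rw [load_update, hj1, hpj]
    cases b0 <;> simp
  have hB : load p (Function.update x j (!x j)) (!b0) = load p x (!b0) + pL := by
    rw [load_update, hj1, hpj]
    cases b0 <;> simp
  have hQs : Q = Q/(S+1) * (S+1) := by field_simp
  have h1 : load p (Function.update x j (!x j)) b0 < makespan p x := by
    rw [hA, ← hb0]; linarith
  have h2 : load p (Function.update x j (!x j)) (!b0) < makespan p x := by
    rw [hB, hlnb0, ← hb0]
    linarith [mul_lt_mul_of_pos_left hkey hden2, hQs, hlb0]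
  rw [makespan]
  cases b0 <;> simp only [Bool.not_false, Bool.not_true] at h1 h2
  · exact max_lt h1 h2
  · exact max_lt h2 h1
end

section
/- Let x be a local optimum of an instance of G*_ε with f(x) > 1/2 whose fuller machine contains at least one small job. Then one of the two machines contains at most s/2 − 1 large jobs and at least (n−s−1)/2 + p₁/p_{s+1} small jobs. -/
open Finset

lemma load_update_aux {n : ℕ} (p : Fin n → ℝ) (x : Fin n → Bool) (i : Fin n) (c' c : Bool) :
    load p (Function.update x i c') c
      = load p x c + (if c' = c then p i else 0) - (if x i = c then p i else 0) := by
  have e : ∀ y : Fin n → Bool, load p y c = ∑ j, if y j = c then p j else 0 :=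
    fun y => Finset.sum_filter _ _
  rw [e, e]
  have h2 : (fun j => if Function.update x i c' j = c then p j else 0)
      = Function.update (fun j => if x j = c then p j else 0) i (if c' = c then p i else 0) := by
    funext j
    by_cases h : j = i <;> simp [Function.update_apply, h]
  rw [h2, Finset.sum_update_of_mem (Finset.mem_univ i),
    Finset.sum_eq_sum_sdiff_singleton_add (Finset.mem_univ i) (fun j => if x j = c then p j else 0)]
  ring

lemma load_decomp_aux (n s : ℕ) (ε : ℝ) (x : Fin n → Bool) (c : Bool) :
    load (gProc n s ε) x c =
      ((Finset.univ.filter fun i : Fin n => x i = c ∧ (i:ℕ) < s).card : ℝ)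
          * (1 / (2 * (s : ℝ) - 1) - ε / (2 * s))
      + ((Finset.univ.filter fun i : Fin n => x i = c ∧ s ≤ (i:ℕ)).card : ℝ)
          * ((((s : ℝ) - 1) / ((n : ℝ) - s)) * (1 / (2 * (s : ℝ) - 1) + ε / (2 * ((s : ℝ) - 1)))) := by
  rw [load, ← Finset.sum_filter_add_sum_filter_not (Finset.univ.filter fun i => x i = c)
      (fun i => (i:ℕ) < s), Finset.filter_filter, Finset.filter_filter]
  congr 1
  · rw [Finset.sum_congr rfl (fun i hi => by
      simp only [mem_filter] at hi
      exact if_pos hi.2.2 : ∀ i ∈ _, gProc n s ε i = 1 / (2 * (s : ℝ) - 1) - ε / (2 * s))]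
    rw [Finset.sum_const, nsmul_eq_mul]
  · rw [show (Finset.univ.filter fun i : Fin n => x i = c ∧ ¬ (i:ℕ) < s)
        = Finset.univ.filter fun i : Fin n => x i = c ∧ s ≤ (i:ℕ) by
      apply Finset.filter_congr; intro i _; simp [not_lt]]
    rw [Finset.sum_congr rfl (fun i hi => by
      simp only [mem_filter, not_lt] at hi
      exact if_neg (by omega) : ∀ i ∈ _, gProc n s ε i
        = (((s : ℝ) - 1) / ((n : ℝ) - s)) * (1 / (2 * (s : ℝ) - 1) + ε / (2 * ((s : ℝ) - 1))))]
    rw [Finset.sum_const, nsmul_eq_mul]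

lemma card_partition_aux (n : ℕ) (x : Fin n → Bool) (c : Bool) (P : Fin n → Prop)
    [DecidablePred P] :
    (Finset.univ.filter fun i => x i = c ∧ P i).card
      + (Finset.univ.filter fun i => x i = !c ∧ P i).card
      = (Finset.univ.filter P).card := by
  rw [← Finset.card_filter_add_card_filter_not (s := Finset.univ.filter P)
    (p := fun i => x i = c), Finset.filter_filter, Finset.filter_filter]
  congr 2
  · apply Finset.filter_congr; intro i _; constructor <;> (intro h; exact ⟨h.2, h.1⟩)
  · apply Finset.filter_congr; intro i _
    cases c <;> simp only [Bool.not_eq_false, Bool.not_eq_true, Bool.not_true, Bool.not_false] <;>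
      (constructor <;> (intro h; exact ⟨h.2, h.1⟩))

lemma card_lt_aux (n s : ℕ) (hsn : s ≤ n) :
    (Finset.univ.filter fun i : Fin n => (i:ℕ) < s).card = s := by
  rw [show (Finset.univ.filter fun i : Fin n => (i:ℕ) < s) =
      Finset.map (Fin.castLEEmb hsn) Finset.univ by
    ext i
    simp only [mem_filter, mem_map, mem_univ, true_and]
    constructor
    · intro h; exact ⟨⟨i, h⟩, by simp⟩
    · rintro ⟨j, rfl⟩; simpa using j.isLt]
  simp

lemma card_ge_aux (n s : ℕ) (hsn : s ≤ n) :
    (Finset.univ.filter fun i : Fin n => s ≤ (i:ℕ)).card = n - s := by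
  have h := Finset.card_filter_add_card_filter_not
    (s := (Finset.univ : Finset (Fin n))) (p := fun i : Fin n => (i:ℕ) < s)
  rw [card_lt_aux n s hsn] at h
  have h2 : (Finset.univ.filter fun i : Fin n => ¬ (i:ℕ) < s)
      = Finset.univ.filter fun i : Fin n => s ≤ (i:ℕ) := by
    apply Finset.filter_congr; intro i _; simp [not_lt]
  rw [h2] at h
  simp only [Finset.card_univ, Fintype.card_fin] at h
  omega

lemma key_arith_aux (t u a α a' α' : ℕ) (L T : ℝ) (hL : 0 < L) (hT : 0 < T) (ht : 1 ≤ t)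
    (hka : a + a' = 2*t) (hma : α + α' = 2*u)
    (hhalf : (t:ℝ)*L + u*T = 1/2)
    (h1 : 1/2 < a*L + α*T) (h2 : (a:ℝ)*L + α*T ≤ 1/2 + T/2) :
    ((a:ℝ) ≤ (t:ℝ) - 1 ∧ (u:ℝ) - 1/2 + L/T ≤ (α:ℝ)) ∨
    ((a':ℝ) ≤ (t:ℝ) - 1 ∧ (u:ℝ) - 1/2 + L/T ≤ (α':ℝ)) := by
  have hdiv : L/T*T = L := div_mul_cancel₀ L hT.ne'
  rcases lt_or_ge a t with hat | hat
  · left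
    have haR : (a:ℝ) ≤ (t:ℝ) - 1 := by
      have : (a:ℝ) + 1 ≤ (t:ℝ) := by exact_mod_cast hat
      linarith
    refine ⟨haR, ?_⟩
    have hmain : ((u:ℝ) - 1/2)*T + L < α*T := by nlinarith
    nlinarith
  · have haR : (t:ℝ) ≤ (a:ℝ) := by exact_mod_cast hat
    have hne : a ≠ t := by
      rintro rfl
      have hαu : α ≤ u := by
        have h3 : (α:ℝ)*T ≤ ((u:ℝ) + 1/2)*T := by nlinarith
        have h4 : (α:ℝ) ≤ (u:ℝ) + 1/2 := by
          have := (mul_le_mul_iff_left₀ hT).mp h3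
          linarith
        by_contra hc
        push_neg at hc
        have : (u:ℝ) + 1 ≤ (α:ℝ) := by exact_mod_cast hc
        linarith
      have h5 : (u:ℝ)*T < (α:ℝ)*T := by nlinarith
      have h6 : (u:ℝ) < (α:ℝ) := (mul_lt_mul_iff_left₀ hT).mp h5
      have : (α:ℝ) ≤ (u:ℝ) := by exact_mod_cast hαu
      linarith
    have hat1 : t + 1 ≤ a := by omega
    have haR1 : (t:ℝ) + 1 ≤ (a:ℝ) := by exact_mod_cast hat1
    right
    constructor
    · have : (a':ℝ) + a = 2*t := by exact_mod_cast (by omega : a' + a = 2*t)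
      linarith
    · have hα' : (α:ℝ) + α' = 2*u := by exact_mod_cast hma
      have hmain : ((u:ℝ) - 1/2)*T + L ≤ (α':ℝ)*T := by nlinarith
      nlinarith

theorem localOpt_unbalanced_machines
    (n s : ℕ) (ε : ℝ) (hn : Even n) (hs : Even s) (h2s : 2 ≤ s) (hsn : s < n)
    (hε0 : 0 < ε) (hε1 : ε < 1 / (2 * (s : ℝ) - 1))
    (x : Fin n → Bool) (hlo : IsLocalOpt (gProc n s ε) x)
    (hhalf : makespan (gProc n s ε) x > 1 / 2)
    (hsmall : ∃ b : Bool, load (gProc n s ε) x b = makespan (gProc n s ε) x ∧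
        ∃ i : Fin n, x i = b ∧ s ≤ (i : ℕ)) :
    ∃ b : Bool,
      ((Finset.univ.filter (fun i : Fin n => x i = b ∧ (i : ℕ) < s)).card : ℝ)
          ≤ (s : ℝ) / 2 - 1 ∧
      ((n : ℝ) - s - 1) / 2 +
          (1 / (2 * (s : ℝ) - 1) - ε / (2 * s)) /
            ((((s : ℝ) - 1) / ((n : ℝ) - s))
              * (1 / (2 * (s : ℝ) - 1) + ε / (2 * ((s : ℝ) - 1))))
        ≤ ((Finset.univ.filter (fun i : Fin n => x i = b ∧ s ≤ (i : ℕ))).card : ℝ) := by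
  obtain ⟨b, hb, i, hxi, his⟩ := hsmall
  obtain ⟨L, hLdef⟩ : ∃ L : ℝ, L = 1 / (2 * (s : ℝ) - 1) - ε / (2 * s) := ⟨_, rfl⟩
  obtain ⟨T, hTdef⟩ : ∃ T : ℝ,
      T = (((s : ℝ) - 1) / ((n : ℝ) - s)) * (1 / (2 * (s : ℝ) - 1) + ε / (2 * ((s : ℝ) - 1))) :=
    ⟨_, rfl⟩
  rw [← hLdef, ← hTdef]
  have hsR : (2:ℝ) ≤ (s:ℝ) := by exact_mod_cast h2s
  have hnR : (s:ℝ) < (n:ℝ) := by exact_mod_cast hsn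
  have h2s1 : (0:ℝ) < 2 * (s:ℝ) - 1 := by linarith
  have hL : 0 < L := by
    have h1 : ε / (2 * (s:ℝ)) < ε := by
      rw [div_lt_iff₀ (by linarith : (0:ℝ) < 2 * s)]
      nlinarith
    rw [hLdef]
    linarith
  have hT : 0 < T := by
    have h1 : (0:ℝ) < ((s:ℝ) - 1) / ((n:ℝ) - s) := by
      apply div_pos <;> linarith
    have h2 : (0:ℝ) < 1 / (2 * (s:ℝ) - 1) + ε / (2 * ((s:ℝ) - 1)) := by
      have : (0:ℝ) < 1 / (2 * (s:ℝ) - 1) := by positivity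
      have : (0:ℝ) < ε / (2 * ((s:ℝ) - 1)) := by
        apply div_pos hε0; linarith
      linarith
    rw [hTdef]
    positivity
  -- the sum identity
  have hsum1 : (s:ℝ) * L + ((n:ℝ) - s) * T = 1 := by
    have h1 : (2:ℝ) * s - 1 ≠ 0 := by linarith
    have h2 : (s:ℝ) ≠ 0 := by linarith
    have h3 : (n:ℝ) - s ≠ 0 := by linarith
    have h4 : (s:ℝ) - 1 ≠ 0 := by linarith
    rw [hLdef, hTdef]
    field_simp
    ring_nf
    have h5 : (-1 + (s:ℝ)*2) ≠ 0 := by linarith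
    rw [show (s:ℝ) * (-1 + (s:ℝ)*2)⁻¹ * 4 - (-1 + (s:ℝ)*2)⁻¹ * 2 = (-1 + (s:ℝ)*2) * (-1 + (s:ℝ)*2)⁻¹ * 2 by ring, mul_inv_cancel₀ h5]
    ring
  -- counts
  set a := (Finset.univ.filter fun j : Fin n => x j = b ∧ (j:ℕ) < s).card with hadef
  set α := (Finset.univ.filter fun j : Fin n => x j = b ∧ s ≤ (j:ℕ)).card with hαdef
  set a' := (Finset.univ.filter fun j : Fin n => x j = !b ∧ (j:ℕ) < s).card with ha'def
  set α' := (Finset.univ.filter fun j : Fin n => x j = !b ∧ s ≤ (j:ℕ)).card with hα'def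
  have hka : a + a' = s := by
    rw [hadef, ha'def, card_partition_aux n x b (fun j : Fin n => (j:ℕ) < s),
      card_lt_aux n s hsn.le]
  have hma : α + α' = n - s := by
    rw [hαdef, hα'def, card_partition_aux n x b (fun j : Fin n => s ≤ (j:ℕ)),
      card_ge_aux n s hsn.le]
  have hloadb : load (gProc n s ε) x b = (a:ℝ) * L + (α:ℝ) * T := by
    rw [hLdef, hTdef]; exact load_decomp_aux n s ε x b
  have hloadb' : load (gProc n s ε) x (!b) = (a':ℝ) * L + (α':ℝ) * T := by
    rw [hLdef, hTdef]; exact load_decomp_aux n s ε x (!b)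
  -- makespan as max over b, !b
  have hmk : ∀ y : Fin n → Bool, makespan (gProc n s ε) y
      = max (load (gProc n s ε) y b) (load (gProc n s ε) y (!b)) := by
    intro y; cases b <;> simp [makespan, max_comm]
  -- local optimality at the small job i
  have hpi : gProc n s ε i = T := by
    rw [hTdef]
    simp only [gProc]
    rw [if_neg (by omega)]
  have hnotb : (!b) ≠ b := Bool.not_ne_self b
  have hflip : makespan (gProc n s ε) x
      ≤ makespan (gProc n s ε) (Function.update x i (!x i)) := not_lt.mp (hlo i)
  have hupb : load (gProc n s ε) (Function.update x i (!x i)) b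
      = load (gProc n s ε) x b - T := by
    rw [load_update_aux, hxi, if_neg hnotb, if_pos rfl, hpi]; ring
  have hupb' : load (gProc n s ε) (Function.update x i (!x i)) (!b)
      = load (gProc n s ε) x (!b) + T := by
    rw [load_update_aux, hxi, if_pos rfl, if_neg hnotb.symm, hpi]; ring
  rw [hmk (Function.update x i (!x i)), hupb, hupb', ← hb] at hflip
  have hloc : load (gProc n s ε) x b ≤ load (gProc n s ε) x (!b) + T := by
    rcases max_cases (load (gProc n s ε) x b - T) (load (gProc n s ε) x (!b) + T) with
      ⟨heq, _⟩ | ⟨heq, _⟩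
    · rw [heq] at hflip; linarith
    · rw [heq] at hflip; linarith
  have hgt : 1/2 < load (gProc n s ε) x b := by rw [hb]; exact hhalf
  -- evenness
  obtain ⟨t, hts⟩ : ∃ t, s = 2 * t := by
    obtain ⟨r, hr⟩ := hs; exact ⟨r, by omega⟩
  obtain ⟨u, hun⟩ : ∃ u, n - s = 2 * u := by
    obtain ⟨r, hr⟩ := hn
    obtain ⟨r', hr'⟩ := hs
    exact ⟨r - r', by omega⟩
  have hsT : (s:ℝ) = 2 * (t:ℝ) := by exact_mod_cast hts
  have hnsT : (n:ℝ) - (s:ℝ) = 2 * (u:ℝ) := by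
    have : ((n - s : ℕ) : ℝ) = (n:ℝ) - (s:ℝ) := by
      rw [Nat.cast_sub hsn.le]
    rw [← this]
    exact_mod_cast hun
  have hhalfid : (t:ℝ) * L + (u:ℝ) * T = 1/2 := by
    have e1 : (s:ℝ) * L = 2 * (t:ℝ) * L := by rw [hsT]
    have e2 : ((n:ℝ) - (s:ℝ)) * T = 2 * (u:ℝ) * T := by rw [hnsT]
    linarith [hsum1, e1, e2]
  have h1 : 1/2 < (a:ℝ) * L + (α:ℝ) * T := by rw [← hloadb]; exact hgt
  have h2 : (a:ℝ) * L + (α:ℝ) * T ≤ 1/2 + T/2 := by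
    have hsum2 : (a:ℝ) * L + (α:ℝ) * T + ((a':ℝ) * L + (α':ℝ) * T) = 1 := by
      have hkaR : (a:ℝ) + (a':ℝ) = (s:ℝ) := by exact_mod_cast hka
      have hmaR : (α:ℝ) + (α':ℝ) = (n:ℝ) - (s:ℝ) := by
        rw [← Nat.cast_sub hsn.le]; exact_mod_cast hma
      linear_combination hsum1 + L * hkaR + T * hmaR
    rw [hloadb, hloadb'] at hloc
    linarith
  have ht1 : 1 ≤ t := by omega
  have hresult := key_arith_aux t u a α a' α' L T hL hT ht1 (by omega) (by omega)
    hhalfid h1 h2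
  have hgoalL : (s:ℝ)/2 - 1 = (t:ℝ) - 1 := by rw [hsT]; ring
  have hgoalR : ((n:ℝ) - s - 1)/2 = (u:ℝ) - 1/2 := by rw [show (n:ℝ) - s - 1 = 2*u - 1 by linarith [hnsT]]; ring
  rcases hresult with ⟨hc1, hc2⟩ | ⟨hc1, hc2⟩
  · exact ⟨b, by rw [hgoalL]; exact_mod_cast hc1, by rw [hgoalR]; exact_mod_cast hc2⟩
  · exact ⟨!b, by rw [hgoalL]; exact_mod_cast hc1, by rw [hgoalR]; exact_mod_cast hc2⟩
end

section
/- Let n be a positive integer, let D and A be disjoint subsets of {1,…,n} with s := |D| + |A|, and let m be an integer with s < m and 2m ≤ n. If σ is a uniformly random permutation of {1,…,n}, then Pr[(∀ j ∈ D, σ(j) ≤ m) and (∀ j ∈ A, σ(j) > n−m)] ≥ ((m−s+1)/(n−s+1))^s. -/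
open Finset

/-- Any embedding of a subtype of a fintype into the fintype extends to a permutation. -/
lemma HypMut.exists_perm_extend {α : Type*} [Fintype α] [DecidableEq α] {p : α → Prop}
    [DecidablePred p] (u : {x // p x} ↪ α) :
    ∃ e : Equiv.Perm α, ∀ x (hx : p x), e x = u ⟨x, hx⟩ := by
  classical
  have h1 : Fintype.card {x // p x} = Fintype.card {y // y ∈ Set.range u} :=
    Fintype.card_congr (Equiv.ofInjective u u.injective)
  have hcard : Fintype.card {x // ¬ p x} = Fintype.card {y // ¬ y ∈ Set.range u} := by
    rw [Fintype.card_subtype_compl, Fintype.card_subtype_compl, h1]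
  let c : {x // ¬ p x} ≃ {y // ¬ y ∈ Set.range u} := Fintype.equivOfCardEq hcard
  let e : Equiv.Perm α := (Equiv.sumCompl p).symm.trans
    ((Equiv.sumCongr (Equiv.ofInjective u u.injective) c).trans
      (Equiv.sumCompl (· ∈ Set.range u)))
  refine ⟨e, fun x hx => ?_⟩
  simp only [e, Equiv.trans_apply, Equiv.sumCompl_symm_apply_of_pos (p := p) hx,
    Equiv.sumCongr_apply, Sum.map_inl, Equiv.sumCompl_apply_inl]
  rfl

namespace HypMut

variable {n : ℕ} {D A : Finset (Fin n)} {m : ℕ}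

/-- The combination of an embedding of `D` into the first window and of `A` into the
last window. -/
def combFun (f : {x // x ∈ D} ↪ {y : Fin n // (y : ℕ) < m})
    (g : {x // x ∈ A} ↪ {y : Fin n // n - m ≤ (y : ℕ)})
    (x : {x // x ∈ D ∪ A}) : Fin n :=
  if hx : x.1 ∈ D then (f ⟨x.1, hx⟩ : Fin n)
  else (g ⟨x.1, (Finset.mem_union.mp x.2).resolve_left hx⟩ : Fin n)

lemma combFun_left (f : {x // x ∈ D} ↪ {y : Fin n // (y : ℕ) < m})
    (g : {x // x ∈ A} ↪ {y : Fin n // n - m ≤ (y : ℕ)})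
    (x : Fin n) (hx : x ∈ D) (hx' : x ∈ D ∪ A) :
    combFun f g ⟨x, hx'⟩ = (f ⟨x, hx⟩ : Fin n) := by
  simp only [combFun, dif_pos hx]

lemma combFun_right (hDA : Disjoint D A)
    (f : {x // x ∈ D} ↪ {y : Fin n // (y : ℕ) < m})
    (g : {x // x ∈ A} ↪ {y : Fin n // n - m ≤ (y : ℕ)})
    (x : Fin n) (hx : x ∈ A) (hx' : x ∈ D ∪ A) :
    combFun f g ⟨x, hx'⟩ = (g ⟨x, hx⟩ : Fin n) := by
  have hxD : ¬ x ∈ D := fun h => (Finset.disjoint_left.mp hDA h) hx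
  simp only [combFun, dif_neg hxD]

lemma combFun_injective (hm2 : 2 * m ≤ n)
    (f : {x // x ∈ D} ↪ {y : Fin n // (y : ℕ) < m})
    (g : {x // x ∈ A} ↪ {y : Fin n // n - m ≤ (y : ℕ)}) :
    Function.Injective (combFun f g) := by
  rintro ⟨x, hx⟩ ⟨y, hy⟩ hxy
  unfold combFun at hxy
  dsimp only at hxy
  by_cases h1 : x ∈ D <;> by_cases h2 : y ∈ D
  · rw [dif_pos h1, dif_pos h2] at hxy
    have h := f.injective (Subtype.ext hxy)
    rw [Subtype.ext_iff] at h
    exact Subtype.ext h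
  · rw [dif_pos h1, dif_neg h2] at hxy
    exfalso
    have a1 : ((f ⟨x, h1⟩ : Fin n) : ℕ) < m := (f _).2
    have a2 : n - m ≤ ((f ⟨x, h1⟩ : Fin n) : ℕ) := by rw [hxy]; exact (g _).2
    omega
  · rw [dif_neg h1, dif_pos h2] at hxy
    exfalso
    have a1 : ((f ⟨y, h2⟩ : Fin n) : ℕ) < m := (f _).2
    have a2 : n - m ≤ ((f ⟨y, h2⟩ : Fin n) : ℕ) := by rw [← hxy]; exact (g _).2
    omega
  · rw [dif_neg h1, dif_neg h2] at hxy
    have h := g.injective (Subtype.ext hxy)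
    rw [Subtype.ext_iff] at h
    exact Subtype.ext h

/-- A permutation extending `combFun f g`. -/
noncomputable def extPerm (hm2 : 2 * m ≤ n)
    (f : {x // x ∈ D} ↪ {y : Fin n // (y : ℕ) < m})
    (g : {x // x ∈ A} ↪ {y : Fin n // n - m ≤ (y : ℕ)}) : Equiv.Perm (Fin n) :=
  (HypMut.exists_perm_extend ⟨combFun f g, combFun_injective hm2 f g⟩).choose

lemma extPerm_spec (hm2 : 2 * m ≤ n)
    (f : {x // x ∈ D} ↪ {y : Fin n // (y : ℕ) < m})
    (g : {x // x ∈ A} ↪ {y : Fin n // n - m ≤ (y : ℕ)})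
    (x : Fin n) (hx : x ∈ D ∪ A) :
    extPerm hm2 f g x = combFun f g ⟨x, hx⟩ :=
  (HypMut.exists_perm_extend _).choose_spec x hx

lemma count_lower (hDA : Disjoint D A) (hm2 : 2 * m ≤ n) :
    m.descFactorial D.card * (m.descFactorial A.card *
        (n - (D.card + A.card)).factorial)
      ≤ (Finset.univ.filter (fun σ : Equiv.Perm (Fin n) =>
            (∀ j ∈ D, ((σ j : ℕ) + 1) ≤ m) ∧ (∀ j ∈ A, n - m < (σ j : ℕ) + 1))).card := by
  classical
  set S := Finset.univ.filter (fun σ : Equiv.Perm (Fin n) =>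
            (∀ j ∈ D, ((σ j : ℕ) + 1) ≤ m) ∧ (∀ j ∈ A, n - m < (σ j : ℕ) + 1)) with hS
  let E := ({x // x ∈ D} ↪ {y : Fin n // (y : ℕ) < m}) ×
      (({x // x ∈ A} ↪ {y : Fin n // n - m ≤ (y : ℕ)}) ×
        Equiv.Perm {x : Fin n // ¬ x ∈ D ∪ A})
  have hΦmem : ∀ e : E, extPerm hm2 e.1 e.2.1 * Equiv.Perm.ofSubtype e.2.2 ∈ S := by
    rintro ⟨f, g, h⟩
    rw [hS, Finset.mem_filter]
    refine ⟨Finset.mem_univ _, fun j hj => ?_, fun j hj => ?_⟩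
    · have hj' : j ∈ D ∪ A := Finset.mem_union_left _ hj
      have h1 : Equiv.Perm.ofSubtype h j = j :=
        Equiv.Perm.ofSubtype_apply_of_not_mem h (not_not.mpr hj')
      show ((extPerm hm2 f g) (Equiv.Perm.ofSubtype h j) : ℕ) + 1 ≤ m
      rw [h1, extPerm_spec hm2 f g j hj', combFun_left f g j hj hj']
      exact (f ⟨j, hj⟩).2
    · have hj' : j ∈ D ∪ A := Finset.mem_union_right _ hj
      have h1 : Equiv.Perm.ofSubtype h j = j :=
        Equiv.Perm.ofSubtype_apply_of_not_mem h (not_not.mpr hj')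
      show n - m < ((extPerm hm2 f g) (Equiv.Perm.ofSubtype h j) : ℕ) + 1
      rw [h1, extPerm_spec hm2 f g j hj', combFun_right hDA f g j hj hj']
      have := (g ⟨j, hj⟩).2
      omega
  let Φ : E → {σ // σ ∈ S} := fun e => ⟨_, hΦmem e⟩
  have hΦinj : Function.Injective Φ := by
    rintro ⟨f, g, h⟩ ⟨f', g', h'⟩ hee
    have heq : extPerm hm2 f g * Equiv.Perm.ofSubtype h
        = extPerm hm2 f' g' * Equiv.Perm.ofSubtype h' := congrArg Subtype.val hee
    have happ : ∀ j : Fin n, (extPerm hm2 f g) (Equiv.Perm.ofSubtype h j)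
        = (extPerm hm2 f' g') (Equiv.Perm.ofSubtype h' j) :=
      fun j => congrFun (congrArg (fun σ : Equiv.Perm (Fin n) => (σ : Fin n → Fin n)) heq) j
    have hf : f = f' := by
      refine DFunLike.ext _ _ fun x => ?_
      have hj' : x.1 ∈ D ∪ A := Finset.mem_union_left _ x.2
      have hx := happ x.1
      rw [Equiv.Perm.ofSubtype_apply_of_not_mem h (not_not.mpr hj'),
        Equiv.Perm.ofSubtype_apply_of_not_mem h' (not_not.mpr hj'),
        extPerm_spec hm2 f g x.1 hj', extPerm_spec hm2 f' g' x.1 hj',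
        combFun_left f g x.1 x.2 hj', combFun_left f' g' x.1 x.2 hj'] at hx
      exact (Subtype.ext hx : f ⟨x.1, x.2⟩ = f' ⟨x.1, x.2⟩)
    have hg : g = g' := by
      refine DFunLike.ext _ _ fun x => ?_
      have hj' : x.1 ∈ D ∪ A := Finset.mem_union_right _ x.2
      have hx := happ x.1
      rw [Equiv.Perm.ofSubtype_apply_of_not_mem h (not_not.mpr hj'),
        Equiv.Perm.ofSubtype_apply_of_not_mem h' (not_not.mpr hj'),
        extPerm_spec hm2 f g x.1 hj', extPerm_spec hm2 f' g' x.1 hj',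
        combFun_right hDA f g x.1 x.2 hj', combFun_right hDA f' g' x.1 x.2 hj'] at hx
      exact (Subtype.ext hx : g ⟨x.1, x.2⟩ = g' ⟨x.1, x.2⟩)
    subst hf; subst hg
    have hhh : Equiv.Perm.ofSubtype h = Equiv.Perm.ofSubtype h' :=
      mul_left_cancel heq
    have : h = h' := by
      apply Equiv.ext
      intro x
      have h2 : Equiv.Perm.ofSubtype h x.1 = Equiv.Perm.ofSubtype h' x.1 := by rw [hhh]
      rw [Equiv.Perm.ofSubtype_apply_of_mem h x.2,
        Equiv.Perm.ofSubtype_apply_of_mem h' x.2] at h2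
      exact Subtype.ext (h2 : ((h ⟨x.1, x.2⟩ : Fin n)) = (h' ⟨x.1, x.2⟩ : Fin n))
    simp [this]
  have hcard := Fintype.card_le_of_injective Φ hΦinj
  have hW1 : Fintype.card {y : Fin n // (y : ℕ) < m} = m := by
    have hmn : m ≤ n := by omega
    refine Fintype.card_congr ⟨fun y => (⟨y.1, y.2⟩ : Fin m),
      fun i => ⟨⟨i.1, lt_of_lt_of_le i.2 hmn⟩, i.2⟩, ?_, ?_⟩ |>.trans (Fintype.card_fin m)
    · rintro ⟨⟨y, hy⟩, h⟩; rfl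
    · rintro ⟨i, hi⟩; rfl
  have hW2 : Fintype.card {y : Fin n // n - m ≤ (y : ℕ)} = m := by
    refine Fintype.card_congr ⟨fun y => (⟨y.1 - (n - m), by
        have := y.1.2; have := y.2; omega⟩ : Fin m),
      fun i => ⟨⟨n - m + i.1, by have := i.2; omega⟩, Nat.le_add_right _ _⟩, ?_, ?_⟩
        |>.trans (Fintype.card_fin m)
    · rintro ⟨⟨y, hy⟩, h⟩
      apply Subtype.ext; apply Fin.ext
      simp at h ⊢
      omega
    · rintro ⟨i, hi⟩
      apply Fin.ext
      show n - m + i - (n - m) = i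
      omega
  have hC : Fintype.card {x : Fin n // ¬ x ∈ D ∪ A} = n - (D.card + A.card) := by
    rw [Fintype.card_subtype_compl]
    congr 1
    · exact Fintype.card_fin n
    · rw [Fintype.card_coe]
      exact Finset.card_union_of_disjoint hDA
  have hE : Fintype.card E =
      m.descFactorial D.card * (m.descFactorial A.card *
        (n - (D.card + A.card)).factorial) := by
    rw [Fintype.card_prod, Fintype.card_prod, Fintype.card_embedding_eq,
      Fintype.card_embedding_eq, Fintype.card_perm, hW1, hW2, hC,
      Fintype.card_coe, Fintype.card_coe]
  rw [← hE]
  calc Fintype.card E ≤ Fintype.card {σ // σ ∈ S} := hcard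
    _ = S.card := Fintype.card_coe S

lemma ratio_key (n m d a i t : ℕ) (hm : d + a < m) (hm2 : 2 * m ≤ n)
    (hit : i ≤ t) (hts : t < d + a) :
    ((m : ℝ) - (d + a) + 1) / ((n : ℝ) - (d + a) + 1)
      ≤ ((m : ℝ) - i) / ((n : ℝ) - t) := by
  have hmn : m ≤ n := by omega
  have h1 : (0:ℝ) < (n : ℝ) - (d + a) + 1 := by
    have : d + a < n := by omega
    have := (Nat.cast_lt (α := ℝ)).mpr this
    push_cast at this ⊢
    linarith
  have h2 : (0:ℝ) < (n : ℝ) - t := by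
    have : t < n := by omega
    have := (Nat.cast_lt (α := ℝ)).mpr this
    linarith
  rw [div_le_div_iff₀ h1 h2]
  have e1 : (0:ℝ) ≤ (n:ℝ) - m := by
    have := (Nat.cast_le (α := ℝ)).mpr hmn; linarith
  have e2 : (0:ℝ) ≤ (d:ℝ) + a - 1 - t := by
    have := (Nat.cast_le (α := ℝ)).mpr hts
    push_cast at this ⊢
    linarith
  have e3 : (0:ℝ) ≤ (t:ℝ) - i := by
    have := (Nat.cast_le (α := ℝ)).mpr hit; linarith
  nlinarith [mul_nonneg e1 e2, mul_nonneg e3 (le_of_lt h1)]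

lemma ratio_pow_le (n m d a : ℕ) (hm : d + a < m) (hm2 : 2 * m ≤ n) :
    (((m : ℝ) - (d + a) + 1) / ((n : ℝ) - (d + a) + 1)) ^ (d + a)
      ≤ ((m.descFactorial d : ℕ) : ℝ) * ((m.descFactorial a : ℕ) : ℝ)
          / ((n.descFactorial (d + a) : ℕ) : ℝ) := by
  have hmn : m ≤ n := by omega
  set r : ℝ := ((m : ℝ) - (d + a) + 1) / ((n : ℝ) - (d + a) + 1) with hr
  have hr0 : 0 ≤ r := by
    apply div_nonneg
    · have := (Nat.cast_lt (α := ℝ)).mpr hm; push_cast at this ⊢; linarith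
    · have : d + a < n := by omega
      have := (Nat.cast_lt (α := ℝ)).mpr this; push_cast at this ⊢; linarith
  have hcastm : ∀ k : ℕ, k ≤ m → (((m.descFactorial k : ℕ)) : ℝ)
      = ∏ i ∈ range k, ((m : ℝ) - i) := by
    intro k hk
    rw [Nat.descFactorial_eq_prod_range, Nat.cast_prod]
    refine Finset.prod_congr rfl fun i hi => ?_
    have : i ≤ m := le_of_lt (lt_of_lt_of_le (mem_range.mp hi) hk)
    push_cast [Nat.cast_sub this]
    ring
  have hcastn : (((n.descFactorial (d + a) : ℕ)) : ℝ)
      = ∏ i ∈ range (d + a), ((n : ℝ) - i) := by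
    rw [Nat.descFactorial_eq_prod_range, Nat.cast_prod]
    refine Finset.prod_congr rfl fun i hi => ?_
    have : i ≤ n := by have := mem_range.mp hi; omega
    push_cast [Nat.cast_sub this]
    ring
  rw [hcastm d (by omega), hcastm a (by omega), hcastn,
    Finset.prod_range_add (fun i => (n : ℝ) - i) d a]
  have hsplit : ∏ x ∈ range a, ((n:ℝ) - ((d + x : ℕ) : ℝ))
      = ∏ x ∈ range a, ((n:ℝ) - ((d:ℝ) + x)) :=
    Finset.prod_congr rfl fun i _ => by push_cast; ring
  rw [hsplit]
  have hQ1 : ∀ i ∈ range d, (0:ℝ) < (n : ℝ) - i := by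
    intro i hi
    have : i < n := by have := mem_range.mp hi; omega
    have := (Nat.cast_lt (α := ℝ)).mpr this; linarith
  have hQ2 : ∀ i ∈ range a, (0:ℝ) < (n : ℝ) - (d + i) := by
    intro i hi
    have : d + i < n := by have := mem_range.mp hi; omega
    have := (Nat.cast_lt (α := ℝ)).mpr this; push_cast at this; linarith
  have key1 : r ^ d ≤ (∏ i ∈ range d, ((m : ℝ) - i)) / ∏ i ∈ range d, ((n : ℝ) - i) := by
    rw [← Finset.prod_div_distrib]
    calc r ^ d = ∏ _i ∈ range d, r := by rw [Finset.prod_const, card_range]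
      _ ≤ _ := by
        refine Finset.prod_le_prod (fun i _ => hr0) fun i hi => ?_
        exact ratio_key n m d a i i hm hm2 le_rfl (by have := mem_range.mp hi; omega)
  have key2 : r ^ a ≤ (∏ i ∈ range a, ((m : ℝ) - i)) / ∏ i ∈ range a, ((n : ℝ) - (d + i)) := by
    rw [← Finset.prod_div_distrib]
    calc r ^ a = ∏ _i ∈ range a, r := by rw [Finset.prod_const, card_range]
      _ ≤ _ := by
        refine Finset.prod_le_prod (fun i _ => hr0) fun i hi => ?_
        have h := ratio_key n m d a i (d + i) hm hm2 (by omega)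
          (by have := mem_range.mp hi; omega)
        push_cast at h ⊢
        exact h
  calc r ^ (d + a) = r ^ d * r ^ a := pow_add r d a
    _ ≤ ((∏ i ∈ range d, ((m : ℝ) - i)) / ∏ i ∈ range d, ((n : ℝ) - i)) *
        ((∏ i ∈ range a, ((m : ℝ) - i)) / ∏ i ∈ range a, ((n : ℝ) - (d + i))) := by
        refine mul_le_mul key1 key2 (pow_nonneg hr0 a) ?_
        apply div_nonneg
        · refine Finset.prod_nonneg fun i hi => ?_
          have : i < m := by have := mem_range.mp hi; omega
          have := (Nat.cast_lt (α := ℝ)).mpr this; linarith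
        · exact le_of_lt (Finset.prod_pos hQ1)
    _ = _ := by rw [div_mul_div_comm]

end HypMut

/-- For a uniformly random permutation `σ` of `{1,…,n}` (modelled as `Fin n`, so that
job `j` gets 1-indexed position `(σ j : ℕ) + 1`), the probability that all positions of
`D` land among the first `m` positions and all positions of `A` land among the last `m`
positions is at least `((m - s + 1)/(n - s + 1))^s` where `s = |D| + |A|`. -/
theorem hypermutation_interval_prob
    (n : ℕ) (hn : 0 < n) (D A : Finset (Fin n)) (hDA : Disjoint D A)
    (m : ℕ) (hm : D.card + A.card < m) (hm2 : 2 * m ≤ n) :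
    (((m : ℝ) - (D.card + A.card) + 1) / ((n : ℝ) - (D.card + A.card) + 1))
        ^ (D.card + A.card)
      ≤ ((Finset.univ.filter (fun σ : Equiv.Perm (Fin n) =>
            (∀ j ∈ D, ((σ j : ℕ) + 1) ≤ m) ∧ (∀ j ∈ A, n - m < (σ j : ℕ) + 1))).card : ℝ)
          / (Nat.factorial n : ℝ) := by
  classical
  have hsn : D.card + A.card ≤ n := by omega
  have hcount := HypMut.count_lower hDA hm2
  have hrat := HypMut.ratio_pow_le n m D.card A.card hm hm2
  set s := D.card + A.card with hs
  set md : ℝ := ((m.descFactorial D.card : ℕ) : ℝ) with hmd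
  set ma : ℝ := ((m.descFactorial A.card : ℕ) : ℝ) with hma
  set nd : ℝ := ((n.descFactorial s : ℕ) : ℝ) with hnd
  set fac : ℝ := (((n - s).factorial : ℕ) : ℝ) with hfacd
  have hnd_pos : (0:ℝ) < nd := by
    have h0 : 0 < n.descFactorial s := by
      rw [Nat.descFactorial_eq_prod_range]
      exact Finset.prod_pos fun i hi => by have := Finset.mem_range.mp hi; omega
    rw [hnd]; exact_mod_cast h0
  have hfac_pos : (0:ℝ) < fac := by
    rw [hfacd]; exact_mod_cast Nat.factorial_pos (n - s)
  have hnfac_pos : (0:ℝ) < ((n.factorial : ℕ) : ℝ) := by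
    exact_mod_cast Nat.factorial_pos n
  have hfactorial : ((n.factorial : ℕ) : ℝ) = fac * nd := by
    rw [hfacd, hnd]
    exact_mod_cast (Nat.factorial_mul_descFactorial hsn).symm
  have hcount' : md * (ma * fac)
      ≤ ((Finset.univ.filter (fun σ : Equiv.Perm (Fin n) =>
            (∀ j ∈ D, ((σ j : ℕ) + 1) ≤ m) ∧ (∀ j ∈ A, n - m < (σ j : ℕ) + 1))).card : ℝ) := by
    rw [hmd, hma, hfacd]
    exact_mod_cast hcount
  calc (((m : ℝ) - (D.card + A.card) + 1) / ((n : ℝ) - (D.card + A.card) + 1)) ^ s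
      ≤ md * ma / nd := hrat
    _ = md * (ma * fac) / ((n.factorial : ℕ) : ℝ) := by
        rw [hfactorial]
        field_simp
    _ ≤ _ := by gcongr
end

section
/- Let n be a positive integer, let a and c be reals with 0 < c < a ≤ 1/2, and let x ∈ {0,1}ⁿ have exactly (1/2 + a)·n one-bits (assumed to be an integer). Let k be an integer with 1 ≤ k ≤ n·(a−c)/(2a−c), let T be a uniformly random k-element subset of {1,…,n}, and let X_k be the string obtained from x by flipping exactly the bits with positions in T. Then, with δ := a·c/((2a+1)·(a−c)), the probability that X_k has fewer than n/2 one-bits is at most exp(−min(δ, δ²)·(1/2+a)·k/3). -/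
open Finset

lemma hyp_dc (α : Type*) [Fintype α] [DecidableEq α] (k : ℕ) (F : Finset α → ℝ) :
    ∑ T ∈ (Finset.univ : Finset α).powersetCard (k+1), (T.card : ℝ) * F T
      = ∑ S ∈ (Finset.univ : Finset α).powersetCard k, ∑ i ∈ Sᶜ, F (insert i S) := by
  have h1 : ∀ T ∈ (Finset.univ : Finset α).powersetCard (k+1),
      (T.card : ℝ) * F T = ∑ i ∈ T, F T := by
    intro T hT; simp [Finset.sum_const, nsmul_eq_mul]
  rw [Finset.sum_congr rfl h1]
  rw [Finset.sum_sigma', Finset.sum_sigma']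
  refine Finset.sum_nbij' (fun p => ⟨p.1.erase p.2, p.2⟩) (fun p => ⟨insert p.2 p.1, p.2⟩) ?_ ?_ ?_ ?_ ?_
  · rintro ⟨T, i⟩ h
    simp only [Finset.mem_sigma, Finset.mem_powersetCard] at h ⊢
    obtain ⟨⟨hsub, hcard⟩, hi⟩ := h
    refine ⟨⟨Finset.subset_univ _, ?_⟩, ?_⟩
    · rw [Finset.card_erase_of_mem hi, hcard]; rfl
    · simp
  · rintro ⟨S, i⟩ h
    simp only [Finset.mem_sigma, Finset.mem_powersetCard, Finset.mem_compl] at h ⊢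
    obtain ⟨⟨hsub, hcard⟩, hi⟩ := h
    refine ⟨⟨Finset.subset_univ _, ?_⟩, ?_⟩
    · rw [Finset.card_insert_of_notMem hi, hcard]
    · simp
  · rintro ⟨T, i⟩ h
    simp only [Finset.mem_sigma, Finset.mem_powersetCard] at h
    simp [Finset.insert_erase h.2]
  · rintro ⟨S, i⟩ h
    simp only [Finset.mem_sigma, Finset.mem_powersetCard, Finset.mem_compl] at h
    simp [Finset.erase_insert h.2]
  · rintro ⟨T, i⟩ h
    simp only [Finset.mem_sigma, Finset.mem_powersetCard] at h
    simp [Finset.insert_erase h.2]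

lemma hyp_count_mem (α : Type*) [Fintype α] [DecidableEq α] (k : ℕ) (i : α) :
    ((Finset.univ : Finset α).powersetCard (k+1) |>.filter (fun S => i ∈ S)).card
      = (Fintype.card α - 1).choose k := by
  have : ((Finset.univ : Finset α).powersetCard (k+1) |>.filter (fun S => i ∈ S)).card
      = ((Finset.univ.erase i).powersetCard k).card := by
    refine Finset.card_bij' (fun S _ => S.erase i) (fun S _ => insert i S) ?_ ?_ ?_ ?_
    · intro S hS
      simp only [Finset.mem_filter, Finset.mem_powersetCard] at hS
      simp only [Finset.mem_powersetCard]
      constructor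
      · intro j hj; simp only [Finset.mem_erase] at hj ⊢; exact ⟨hj.1, Finset.mem_univ _⟩
      · rw [Finset.card_erase_of_mem hS.2, hS.1.2]; rfl
    · intro S hS
      simp only [Finset.mem_powersetCard] at hS
      have hi : i ∉ S := fun h => by
        have := hS.1 h; simp at this
      simp only [Finset.mem_filter, Finset.mem_powersetCard]
      exact ⟨⟨Finset.subset_univ _, by rw [Finset.card_insert_of_notMem hi, hS.2]⟩,
        Finset.mem_insert_self _ _⟩
    · intro S hS
      simp only [Finset.mem_filter] at hS
      exact Finset.insert_erase hS.2
    · intro S hS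
      simp only [Finset.mem_powersetCard] at hS
      have hi : i ∉ S := fun h => by have := hS.1 h; simp at this
      exact Finset.erase_insert hi
  rw [this, Finset.card_powersetCard, Finset.card_erase_of_mem (Finset.mem_univ i),
    Finset.card_univ]

lemma hyp_sumY (α : Type*) [Fintype α] [DecidableEq α] (O : Finset α) (k : ℕ) :
    Fintype.card α * ∑ S ∈ (Finset.univ : Finset α).powersetCard k, (S ∩ O).card
      = O.card * (k * (Fintype.card α).choose k) := by
  have hsum : ∑ S ∈ (Finset.univ : Finset α).powersetCard k, (S ∩ O).card
      = ∑ i ∈ O, ((Finset.univ : Finset α).powersetCard k |>.filter (fun S => i ∈ S)).card := by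
    have h1 : ∀ S : Finset α, (S ∩ O).card = ∑ i ∈ O, if i ∈ S then 1 else 0 := by
      intro S
      rw [Finset.inter_comm, ← Finset.filter_mem_eq_inter, Finset.card_filter]
    simp_rw [h1]
    rw [Finset.sum_comm]
    congr 1; ext i
    rw [Finset.card_filter]
  rw [hsum]
  cases k with
  | zero =>
    simp only [Finset.powersetCard_zero, Nat.zero_mul, Nat.mul_zero]
    rw [Finset.sum_congr rfl (fun i _ => by simp [Finset.filter_singleton] : ∀ i ∈ O, (Finset.filter (fun S => i ∈ S) {(∅ : Finset α)}).card = 0)]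
    simp
  | succ k =>
    cases hn : Fintype.card α with
    | zero =>
      have hO : O = ∅ := by
        have := Fintype.card_eq_zero_iff.mp hn
        exact Finset.eq_empty_of_forall_notMem (fun i _ => (this.false i).elim)
      simp [hO, hn]
    | succ m =>
      have : ∀ i ∈ O, ((Finset.univ : Finset α).powersetCard (k+1) |>.filter
          (fun S => i ∈ S)).card = (Fintype.card α - 1).choose k :=
        fun i _ => hyp_count_mem α k i
      rw [Finset.sum_congr rfl this, Finset.sum_const, smul_eq_mul, hn]
      simp only [Nat.add_sub_cancel]
      have h2 : (m+1) * m.choose k = (m+1).choose (k+1) * (k+1) := Nat.add_one_mul_choose_eq m k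
      rw [mul_left_comm, h2]
      ring

lemma hyp_mgf (α : Type*) [Fintype α] [DecidableEq α] (O : Finset α) (l : ℝ) (hl : 1 ≤ l)
    (k : ℕ) :
    ∑ T ∈ (Finset.univ : Finset α).powersetCard k, l ^ (T ∩ O).card
      ≤ ((Fintype.card α).choose k : ℝ)
        * (1 + (l - 1) * O.card / Fintype.card α) ^ k := by
  set n := Fintype.card α with hn
  set m := O.card with hm
  have hmn : m ≤ n := by rw [hm, hn, ← Finset.card_univ]; exact Finset.card_le_card (Finset.subset_univ O)
  set q : ℝ := 1 + (l - 1) * m / n with hq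
  have hq1 : 1 ≤ q := by
    rw [hq]
    have : 0 ≤ (l - 1) * m / n :=
      div_nonneg (mul_nonneg (by linarith) (Nat.cast_nonneg _)) (Nat.cast_nonneg _)
    linarith
  have hq0 : 0 < q := lt_of_lt_of_le one_pos hq1
  induction k with
  | zero => simp
  | succ k ih =>
    by_cases hkn : k + 1 ≤ n
    case neg =>
      have : (Finset.univ : Finset α).powersetCard (k+1) = ∅ := by
        rw [Finset.powersetCard_eq_empty]
        rw [Finset.card_univ, ← hn]; omega
      rw [this]
      simp only [Finset.sum_empty]
      positivity
    case pos =>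
      have hkn' : k ≤ n := by omega
      have hn0 : 0 < n := by omega
      have hC : (0:ℝ) < (n.choose k : ℝ) := by
        exact_mod_cast Nat.choose_pos hkn'
      set F : Finset α → ℝ := fun T => l ^ (T ∩ O).card with hF
      set M : ℕ → ℝ := fun j => ∑ T ∈ (Finset.univ : Finset α).powersetCard j, F T with hM
      have hMpos : ∀ j, 0 ≤ M j := by
        intro j; apply Finset.sum_nonneg; intro T _; positivity
      -- inner sum computation
      have hinner : ∀ S ∈ (Finset.univ : Finset α).powersetCard k,
          ∑ i ∈ Sᶜ, F (insert i S)
            = F S * (((n:ℝ) - k) + (l - 1) * ((m:ℝ) - (S ∩ O).card)) := by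
        intro S hS
        rw [Finset.mem_powersetCard] at hS
        have hScard : S.card = k := hS.2
        have hsplit : Sᶜ = (Sᶜ ∩ O) ∪ (Sᶜ \ O) := by
          rw [Finset.union_comm, Finset.sdiff_union_inter]
        have hdisj : Disjoint (Sᶜ ∩ O) (Sᶜ \ O) := by
          apply Finset.disjoint_left.mpr
          intro a ha hb
          rw [Finset.mem_inter] at ha
          rw [Finset.mem_sdiff] at hb
          exact hb.2 ha.2
        have hval : ∀ i ∈ Sᶜ, F (insert i S) = if i ∈ O then l * F S else F S := by
          intro i hi
          rw [Finset.mem_compl] at hi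
          simp only [hF]
          by_cases hiO : i ∈ O
          · rw [if_pos hiO, Finset.insert_inter_of_mem hiO,
              Finset.card_insert_of_notMem (fun h => hi (Finset.mem_inter.mp h).1)]
            ring
          · rw [if_neg hiO, Finset.insert_inter_of_notMem hiO]
        rw [Finset.sum_congr rfl hval, Finset.sum_ite, Finset.sum_const, Finset.sum_const,
          nsmul_eq_mul, nsmul_eq_mul]
        have e1 : Finset.filter (fun i => i ∈ O) Sᶜ = Sᶜ ∩ O := by
          ext i; simp [Finset.mem_inter, Finset.mem_filter]
        have e2 : Finset.filter (fun i => ¬ i ∈ O) Sᶜ = Sᶜ \ O := by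
          ext i; simp [Finset.mem_sdiff, Finset.mem_filter]
        rw [e1, e2]
        have c1 : (Sᶜ ∩ O).card + (S ∩ O).card = m := by
          have : Sᶜ ∩ O = O \ S := by
            ext i; simp [Finset.mem_sdiff, Finset.mem_inter, Finset.mem_compl, and_comm]
          rw [this, Finset.inter_comm]
          exact Finset.card_sdiff_add_card_inter O S
        have c2 : (Sᶜ \ O).card + (Sᶜ ∩ O).card = n - k := by
          rw [Finset.card_sdiff_add_card_inter, Finset.card_compl, hScard]
        have c1' : ((Sᶜ ∩ O).card : ℝ) = (m:ℝ) - (S ∩ O).card := by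
          have := c1; push_cast [← this]; ring
        have c2' : ((Sᶜ \ O).card : ℝ) = ((n:ℝ) - k) - ((m:ℝ) - (S ∩ O).card) := by
          have h := c2
          have : ((Sᶜ \ O).card : ℝ) + ((Sᶜ ∩ O).card : ℝ) = (n:ℝ) - k := by
            rw [← Nat.cast_add, h]
            push_cast [Nat.cast_sub hkn']
            ring
          rw [c1'] at this; linarith
        rw [c1', c2']
        ring
      -- now the recursion
      have hrec : ((k:ℝ)+1) * M (k+1)
          = ((n:ℝ) - k) * M k
            + (l - 1) * ∑ S ∈ (Finset.univ : Finset α).powersetCard k,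
                F S * ((m:ℝ) - (S ∩ O).card) := by
        have hdc := hyp_dc α k F
        have hcardT : ∀ T ∈ (Finset.univ : Finset α).powersetCard (k+1),
            ((T.card : ℝ)) * F T = ((k:ℝ)+1) * F T := by
          intro T hT
          rw [Finset.mem_powersetCard] at hT
          rw [hT.2]; push_cast; ring
        rw [Finset.sum_congr rfl hcardT, ← Finset.mul_sum] at hdc
        rw [Finset.sum_congr rfl hinner] at hdc
        rw [hM]
        simp only [hdc]
        rw [Finset.sum_congr rfl
          (fun S _ => by ring :
            ∀ S ∈ (Finset.univ : Finset α).powersetCard k,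
              F S * (((n:ℝ) - k) + (l - 1) * ((m:ℝ) - (S ∩ O).card))
                = ((n:ℝ)-k) * F S + (l-1) * (F S * ((m:ℝ) - (S ∩ O).card)))]
        rw [Finset.sum_add_distrib, ← Finset.mul_sum, ← Finset.mul_sum]
      -- Chebyshev
      have hcheb : ∑ S ∈ (Finset.univ : Finset α).powersetCard k,
            F S * ((m:ℝ) - (S ∩ O).card)
          ≤ M k * ((m:ℝ) * ((n:ℝ)-k) / n) := by
        have hanti : AntivaryOn F (fun S => (m:ℝ) - (S ∩ O).card)
            (((Finset.univ : Finset α).powersetCard k : Finset (Finset α)) : Set (Finset α)) := by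
          intro S _ T _ hST
          simp only at hST
          have : (T ∩ O).card < (S ∩ O).card := by
            by_contra h
            push_neg at h
            have : ((T ∩ O).card : ℝ) ≥ (S ∩ O).card := by exact_mod_cast h
            linarith
          simp only [hF]
          exact pow_le_pow_right₀ (by linarith) (le_of_lt this)
        have := hanti.card_mul_sum_le_sum_mul_sum
        rw [Finset.card_powersetCard, Finset.card_univ, ← hn] at this
        -- this : (n.choose k) * Σ fg ≤ (Σ f) * (Σ g)
        have hsg : ∑ S ∈ (Finset.univ : Finset α).powersetCard k,
            ((m:ℝ) - (S ∩ O).card) = (n.choose k : ℝ) * ((m:ℝ) * ((n:ℝ)-k) / n) := by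
          rw [Finset.sum_sub_distrib, Finset.sum_const, Finset.card_powersetCard,
            Finset.card_univ, ← hn]
          have hsY := hyp_sumY α O k
          rw [← hn, ← hm] at hsY
          have hsY' : (n:ℝ) * ∑ S ∈ (Finset.univ : Finset α).powersetCard k,
              ((S ∩ O).card : ℝ) = (m:ℝ) * ((k:ℝ) * (n.choose k : ℝ)) := by
            exact_mod_cast congrArg (Nat.cast : ℕ → ℝ) hsY
          have hnR : (0:ℝ) < (n:ℝ) := by exact_mod_cast hn0
          have : ∑ S ∈ (Finset.univ : Finset α).powersetCard k, ((S ∩ O).card : ℝ)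
              = (m:ℝ) * ((k:ℝ) * (n.choose k : ℝ)) / n := by
            field_simp at hsY' ⊢
            linarith [hsY']
          rw [this, nsmul_eq_mul]
          field_simp
        rw [hsg] at this
        calc ∑ S ∈ (Finset.univ : Finset α).powersetCard k, F S * ((m:ℝ) - (S ∩ O).card)
            ≤ (∑ S ∈ (Finset.univ : Finset α).powersetCard k, F S)
              * ((n.choose k : ℝ) * ((m:ℝ) * ((n:ℝ)-k) / n)) / (n.choose k : ℝ) := by
              rw [le_div_iff₀ hC]
              calc (∑ S ∈ (Finset.univ : Finset α).powersetCard k, F S * ((m:ℝ) - (S ∩ O).card)) * (n.choose k:ℝ)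
                  = (n.choose k:ℝ) * ∑ S ∈ (Finset.univ : Finset α).powersetCard k, F S * ((m:ℝ) - (S ∩ O).card) := by ring
                _ ≤ _ := this
          _ = M k * ((m:ℝ) * ((n:ℝ)-k) / n) := by
              rw [hM]
              field_simp
      -- combine
      have hnk : (0:ℝ) ≤ (n:ℝ) - k := by
        have : (k:ℝ) ≤ n := by exact_mod_cast hkn'
        linarith
      have hstep : ((k:ℝ)+1) * M (k+1) ≤ ((n:ℝ) - k) * M k * q := by
        rw [hrec]
        have h1 : (l - 1) * (∑ S ∈ (Finset.univ : Finset α).powersetCard k,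
            F S * ((m:ℝ) - (S ∩ O).card)) ≤ (l-1) * (M k * ((m:ℝ) * ((n:ℝ)-k) / n)) :=
          mul_le_mul_of_nonneg_left hcheb (by linarith)
        have hMk := hMpos k
        calc ((n:ℝ) - k) * M k + (l - 1) * ∑ S ∈ (Finset.univ : Finset α).powersetCard k,
                F S * ((m:ℝ) - (S ∩ O).card)
            ≤ ((n:ℝ) - k) * M k + (l-1) * (M k * ((m:ℝ) * ((n:ℝ)-k) / n)) := by linarith
          _ = ((n:ℝ) - k) * M k * q := by
              rw [hq]
              field_simp
      have hchoose : ((n:ℝ) - k) * (n.choose k : ℝ) = ((k:ℝ)+1) * (n.choose (k+1) : ℝ) := by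
        have h := Nat.choose_succ_right_eq n k
        have h' : (n.choose (k+1) : ℝ) * ((k:ℝ)+1) = (n.choose k : ℝ) * ((n:ℝ) - k) := by
          have : ((n.choose (k+1) * (k+1) : ℕ) : ℝ) = ((n.choose k * (n - k) : ℕ) : ℝ) := by
            exact_mod_cast congrArg (Nat.cast : ℕ → ℝ) h
          push_cast [Nat.cast_sub hkn'] at this
          linarith [this]
        linarith [h']
      have hk1R : (0:ℝ) < (k:ℝ) + 1 := by positivity
      rw [show (∑ T ∈ (Finset.univ : Finset α).powersetCard (k+1), l ^ (T ∩ O).card) = M (k+1) from rfl]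
      rw [← mul_le_mul_iff_right₀ hk1R]
      calc ((k:ℝ)+1) * M (k+1) ≤ ((n:ℝ) - k) * M k * q := hstep
        _ ≤ ((n:ℝ) - k) * ((n.choose k : ℝ) * q ^ k) * q := by
            apply mul_le_mul_of_nonneg_right _ (le_of_lt hq0)
            exact mul_le_mul_of_nonneg_left ih hnk
        _ = (((n:ℝ) - k) * (n.choose k : ℝ)) * q ^ (k+1) := by ring
        _ = ((k:ℝ)+1) * ((n.choose (k+1) : ℝ) * q ^ (k+1)) := by rw [hchoose]; ring


lemma hyp_log_lb {x : ℝ} (hx : 0 ≤ x) : 2*x/(2+x) ≤ Real.log (1+x) := by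
  have key : ∀ y ∈ Set.Ici (0:ℝ), Real.log (1+y) - 2*y/(2+y) ≥ 0 := by
    have hmono : MonotoneOn (fun y : ℝ => Real.log (1+y) - 2*y/(2+y)) (Set.Ici 0) := by
      have hderiv : ∀ y ∈ Set.Ioi (0:ℝ),
          HasDerivAt (fun y : ℝ => Real.log (1+y) - 2*y/(2+y))
            (1/(1+y) - 4/(2+y)^2) y := by
        intro y hy
        simp only [Set.mem_Ioi] at hy
        have h1 : HasDerivAt (fun y : ℝ => 1 + y) 1 y :=
          (hasDerivAt_id y).const_add 1
        have hlog : HasDerivAt (fun y : ℝ => Real.log (1+y)) (1/(1+y)) y := by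
          have := (h1.log (by linarith : (1:ℝ)+y ≠ 0))
          simpa using this
        have hnum : HasDerivAt (fun y : ℝ => 2*y) 2 y := by
          simpa using (hasDerivAt_id y).const_mul 2
        have hden : HasDerivAt (fun y : ℝ => 2+y) 1 y := (hasDerivAt_id y).const_add 2
        have hdiv : HasDerivAt (fun y : ℝ => 2*y/(2+y))
            ((2*(2+y) - 2*y*1)/(2+y)^2) y := hnum.div hden (by linarith)
        have : (2*(2+y) - 2*y*1)/(2+y)^2 = 4/(2+y)^2 := by ring_nf
        rw [this] at hdiv
        exact hlog.sub hdiv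
      apply monotoneOn_of_deriv_nonneg (convex_Ici 0)
      · apply ContinuousOn.sub
        · apply ContinuousOn.log (by fun_prop)
          intro y hy; simp only [Set.mem_Ici] at hy; intro h; linarith [h]
        · apply ContinuousOn.div (by fun_prop) (by fun_prop)
          intro y hy; simp only [Set.mem_Ici] at hy; intro h; linarith [h]
      · intro y hy
        rw [interior_Ici] at hy
        exact ((hderiv y hy).differentiableAt).differentiableWithinAt
      · intro y hy
        rw [interior_Ici] at hy
        rw [(hderiv y hy).deriv]
        simp only [Set.mem_Ioi] at hy
        rw [sub_nonneg, div_le_div_iff₀ (by positivity) (by positivity)]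
        nlinarith
    intro y hy
    have h0 : (fun y : ℝ => Real.log (1+y) - 2*y/(2+y)) 0 = 0 := by norm_num
    have := hmono (Set.self_mem_Ici) hy (by exact hy)
    rw [h0] at this
    linarith [this]
  have := key x hx
  linarith [this]

lemma hyp_chernoff_key {d : ℝ} (hd : 0 ≤ d) :
    d + min d (d^2) / 3 ≤ (1+d) * Real.log (1+d) := by
  have hlb := hyp_log_lb hd
  have h2d : (0:ℝ) < 2 + d := by linarith
  have hmain : d + min d (d^2) / 3 ≤ (1+d) * (2*d/(2+d)) := by
    rcases le_total d 1 with h1 | h1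
    · rw [min_eq_right (by nlinarith : d^2 ≤ d)]
      rw [← sub_nonneg]
      have : (1+d) * (2*d/(2+d)) - (d + d^2/3) = (d^2 * (1 - d)) / (3 * (2+d)) := by
        field_simp
        ring
      rw [this]
      have h1d : (0:ℝ) ≤ 1 - d := by linarith
      positivity
    · rw [min_eq_left (by nlinarith : d ≤ d^2)]
      rw [← sub_nonneg]
      have : (1+d) * (2*d/(2+d)) - (d + d/3) = (2 * d * (d - 1)) / (3 * (2+d)) := by
        field_simp
        ring
      rw [this]
      have : 0 ≤ d - 1 := by linarith
      positivity
  calc d + min d (d^2)/3 ≤ (1+d) * (2*d/(2+d)) := hmain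
    _ ≤ (1+d) * Real.log (1+d) := by
        apply mul_le_mul_of_nonneg_left hlb (by linarith)

set_option maxHeartbeats 1000000 in
/-- If `x ∈ {0,1}ⁿ` has exactly `(1/2 + a)n` one-bits and `T` is a uniformly random
`k`-element subset of the positions with `1 ≤ k ≤ n(a-c)/(2a-c)`, then, with
`δ := ac/((2a+1)(a-c))`, the probability that the string obtained from `x` by flipping
exactly the bits in `T` has fewer than `n/2` one-bits is at most
`exp(-min(δ,δ²) (1/2+a) k / 3)`. -/
theorem hypermutation_below_half_prob
    (n : ℕ) (hn : 0 < n) (a c : ℝ) (hc : 0 < c) (hca : c < a) (ha : a ≤ 1 / 2)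
    (x : Fin n → Bool)
    (hx : ((Finset.univ.filter (fun i => x i = true)).card : ℝ) = (1 / 2 + a) * n)
    (k : ℕ) (hk1 : 1 ≤ k) (hk2 : (k : ℝ) ≤ (n : ℝ) * (a - c) / (2 * a - c)) :
    ({T : Finset (Fin n) | T.card = k ∧
        ((Finset.univ.filter
            (fun i => (if i ∈ T then !(x i) else x i) = true)).card : ℝ) <
          (n : ℝ) / 2}.ncard : ℝ)
        / (Nat.choose n k : ℝ)
      ≤ Real.exp (-(min (a * c / ((2 * a + 1) * (a - c)))
            ((a * c / ((2 * a + 1) * (a - c))) ^ 2) * (1 / 2 + a) * (k : ℝ) / 3)) := by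
  classical
  -- basic positivity facts
  have hac : 0 < a - c := by linarith
  have h2ac : 0 < 2 * a - c := by linarith
  have ha0 : 0 < a := lt_trans hc hca
  set d : ℝ := a * c / ((2 * a + 1) * (a - c)) with hd
  have hd0 : 0 < d := by
    rw [hd]; positivity
  set l : ℝ := 1 + d with hldef
  have hl1 : (1:ℝ) ≤ l := by rw [hldef]; linarith
  have hl0 : (0:ℝ) < l := by linarith
  set p : ℝ := 1/2 + a with hp
  have hp0 : (0:ℝ) < p := by rw [hp]; linarith
  set O : Finset (Fin n) := Finset.univ.filter (fun i => x i = true) with hO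
  set m : ℕ := O.card with hm
  have hmR : (m : ℝ) = p * n := by rw [hm, hO, hp]; exact_mod_cast hx
  have hnR : (0:ℝ) < (n:ℝ) := by exact_mod_cast hn
  have hkn : k < n := by
    have h1 : ((n:ℝ)) * (a - c) / (2 * a - c) < n := by
      rw [div_lt_iff₀ h2ac]
      nlinarith
    have : (k:ℝ) < n := lt_of_le_of_lt hk2 h1
    exact_mod_cast this
  have hCpos : (0:ℝ) < (n.choose k : ℝ) := by
    exact_mod_cast Nat.choose_pos (le_of_lt hkn)
  set s : ℝ := (a * n + k) / 2 with hs
  -- threshold bound : (1+d) * p * k ≤ s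
  have hthr : (1 + d) * p * k ≤ s := by
    rw [hs, hp]
    have hkR : (k:ℝ) * (2*a - c) ≤ (n:ℝ) * (a - c) := by
      rw [le_div_iff₀ h2ac] at hk2; linarith
    have hkpos : (0:ℝ) < (k:ℝ) := by exact_mod_cast hk1
    have hdval : d * ((2*a+1)*(a-c)) = a*c := by
      rw [hd]; field_simp
    nlinarith [hdval, mul_le_mul_of_nonneg_left hkR ha0.le, mul_pos hkpos hac,
      mul_nonneg (mul_nonneg (le_of_lt hkpos) (le_of_lt hac)) (le_of_lt ha0),
      mul_pos (mul_pos hkpos hac) ha0]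
  -- the event set as a Finset
  set P : Finset (Fin n) → Prop := fun T => T.card = k ∧
      ((Finset.univ.filter
          (fun i => (if i ∈ T then !(x i) else x i) = true)).card : ℝ) < (n : ℝ) / 2 with hP
  set E : Finset (Finset (Fin n)) := Finset.univ.filter P with hE
  have hset : {T : Finset (Fin n) | P T} = (E : Set (Finset (Fin n))) := by
    ext T; simp [hE]
  have hncard : ({T : Finset (Fin n) | P T}.ncard : ℝ) = (E.card : ℝ) := by
    rw [hset, Set.ncard_coe_finset]
  -- event implies Y > s
  have hY : ∀ T ∈ E, s < ((T ∩ O).card : ℝ) := by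
    intro T hT
    rw [hE, Finset.mem_filter] at hT
    obtain ⟨-, hTk, hTlt⟩ := hT
    set Y : ℕ := (T ∩ O).card with hYdef
    have hflip : Finset.univ.filter
        (fun i => (if i ∈ T then !(x i) else x i) = true) = (T \ O) ∪ (O \ T) := by
      ext i
      simp only [Finset.mem_filter, Finset.mem_univ, true_and, Finset.mem_union,
        Finset.mem_sdiff, hO]
      by_cases hiT : i ∈ T <;> by_cases hxi : x i = true <;>
        simp [hiT, hxi]
    have hc1 : (T \ O).card + Y = k := by
      rw [hYdef, ← hTk]; exact Finset.card_sdiff_add_card_inter T O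
    have hc2 : (O \ T).card + Y = m := by
      rw [hYdef, hm, Finset.inter_comm]; exact Finset.card_sdiff_add_card_inter O T
    have hdisj : Disjoint (T \ O) (O \ T) := by
      apply Finset.disjoint_left.mpr
      intro i hi hj
      rw [Finset.mem_sdiff] at hi hj
      exact hi.2 hj.1
    have hcard : ((Finset.univ.filter
        (fun i => (if i ∈ T then !(x i) else x i) = true)).card : ℝ)
        = (k : ℝ) + m - 2 * Y := by
      rw [hflip, Finset.card_union_of_disjoint hdisj]
      have := hc1; have := hc2
      push_cast [← hc1, ← hc2]
      ring
    rw [hcard] at hTlt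
    rw [hs]
    rw [hmR, hp] at hTlt
    rw [hYdef]
    nlinarith [hTlt]
  -- Chernoff counting
  set q : ℝ := 1 + (l - 1) * m / n with hq
  have hqp : q = 1 + d * p := by
    rw [hq, hldef, hmR]
    field_simp
    ring
  have hq0 : (0:ℝ) < q := by
    rw [hqp]
    have := mul_pos hd0 hp0
    linarith
  have hlspos : (0:ℝ) < l ^ s := Real.rpow_pos_of_pos hl0 s
  have hEsub : E ⊆ (Finset.univ : Finset (Fin n)).powersetCard k := by
    intro T hT
    rw [hE, Finset.mem_filter] at hT
    rw [Finset.mem_powersetCard]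
    exact ⟨Finset.subset_univ _, hT.2.1⟩
  have hEbound : (E.card : ℝ) * l ^ s ≤ (n.choose k : ℝ) * q ^ k := by
    have h1 : (E.card : ℝ) * l ^ s ≤ ∑ T ∈ E, (l : ℝ) ^ ((T ∩ O).card) := by
      rw [← nsmul_eq_mul, ← Finset.sum_const]
      apply Finset.sum_le_sum
      intro T hT
      have h2 := Real.rpow_le_rpow_of_exponent_le hl1 (le_of_lt (hY T hT))
      rwa [Real.rpow_natCast] at h2
    have h2 : ∑ T ∈ E, (l : ℝ) ^ ((T ∩ O).card)
        ≤ ∑ T ∈ (Finset.univ : Finset (Fin n)).powersetCard k, (l : ℝ) ^ ((T ∩ O).card) := by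
      apply Finset.sum_le_sum_of_subset_of_nonneg hEsub
      intro T _ _
      positivity
    have h3 := hyp_mgf (Fin n) O l hl1 k
    rw [Fintype.card_fin] at h3
    have h3' : ∑ T ∈ (Finset.univ : Finset (Fin n)).powersetCard k,
        (l : ℝ) ^ ((T ∩ O).card) ≤ (n.choose k : ℝ) * q ^ k := by
      rw [hq, hm]; exact h3
    linarith
  clear_value d l p s q
  -- final exponential estimate
  have hfinal : (n.choose k : ℝ) * q ^ k / ((n.choose k : ℝ) * l ^ s)
      ≤ Real.exp (-(min d (d^2) * p * (k:ℝ) / 3)) := by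
    have hqk : q ^ k = Real.exp ((k:ℝ) * Real.log q) := by
      rw [Real.exp_nat_mul, Real.exp_log hq0]
    have hls : l ^ s = Real.exp (Real.log l * s) := Real.rpow_def_of_pos hl0 s
    rw [mul_div_mul_left _ _ (ne_of_gt hCpos), hqk, hls, ← Real.exp_sub, Real.exp_le_exp]
    have hlogq : Real.log q ≤ d * p := by
      have := Real.log_le_sub_one_of_pos hq0
      rw [hqp] at this ⊢
      linarith
    have hlogl : 0 ≤ Real.log l := Real.log_nonneg hl1
    have hkey := hyp_chernoff_key (le_of_lt hd0)
    rw [← hldef] at hkey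
    rw [← hldef] at hthr
    have hk0 : (0:ℝ) ≤ (k:ℝ) := Nat.cast_nonneg k
    have f1 : (k:ℝ) * Real.log q ≤ (k:ℝ) * (d * p) :=
      mul_le_mul_of_nonneg_left hlogq hk0
    have f2 : l * p * (k:ℝ) * Real.log l ≤ s * Real.log l :=
      mul_le_mul_of_nonneg_right hthr hlogl
    have f3 : p * (k:ℝ) * (d + min d (d^2)/3) ≤ p * (k:ℝ) * (l * Real.log l) :=
      mul_le_mul_of_nonneg_left hkey (by positivity)
    nlinarith [f1, f2, f3]
  -- put everything together
  rw [hncard]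
  have hstep1 : (E.card : ℝ) / (n.choose k : ℝ)
      ≤ (n.choose k : ℝ) * q ^ k / ((n.choose k : ℝ) * l ^ s) := by
    rw [div_le_div_iff₀ hCpos (by positivity)]
    calc (E.card : ℝ) * ((n.choose k : ℝ) * l ^ s)
        = ((E.card : ℝ) * l ^ s) * (n.choose k : ℝ) := by ring
      _ ≤ ((n.choose k : ℝ) * q ^ k) * (n.choose k : ℝ) :=
          mul_le_mul_of_nonneg_right hEbound (le_of_lt hCpos)
    -- goal shape check
  calc (E.card : ℝ) / (n.choose k : ℝ)
      ≤ (n.choose k : ℝ) * q ^ k / ((n.choose k : ℝ) * l ^ s) := hstep1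
    _ ≤ Real.exp (-(min d (d^2) * p * (k:ℝ) / 3)) := hfinal
end
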